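/- Let p : ℝ → ℝ be a polynomial of degree k ≥ 1. Then there exist constants b₀, b₁, ..., b_k ∈ ℝ such that b₀ + b₁·p(n-1) + b₂·p(n-2) + ... + b_k·p(n-k) = n for all n ∈ ℝ. Consequently, the sequence s(n) = p(n) satisfies the depth-k recurrence s(n) = p(b₀ + b₁·s(n-1) + ... + b_k·s(n-k)). -/

import Mathlib

open Polynomial

lemma delta_natDegree (q : ℝ[X]) (m : ℕ) (hm : q.natDegree = m) (h1 : 1 ≤ m) :
    (q - q.comp (X - C 1)).natDegree = m - 1 ∧ q - q.comp (X - C 1) ≠ 0 := by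
  have hcomp : q.comp (X - C 1) = taylor (-1) q := by
    rw [taylor_apply]; congr 1; simp [sub_eq_add_neg]
  have hq0 : q ≠ 0 := fun h => by simp [h] at hm; omega
  have hlc : q.coeff m ≠ 0 := by
    rw [← hm, ← leadingCoeff]; exact leadingCoeff_ne_zero.mpr hq0
  have hcoeffm1 : (q - q.comp (X - C 1)).coeff (m - 1) = m * q.coeff m := by
    rw [hcomp, coeff_sub, taylor_coeff]
    have hd : (hasseDeriv (m-1) q).natDegree < 2 := by
      have := natDegree_hasseDeriv_le q (m - 1); omega
    rw [eval_eq_sum_range' hd]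
    simp only [Finset.sum_range_succ, Finset.sum_range_one, pow_zero, pow_one, mul_one]
    rw [hasseDeriv_coeff, hasseDeriv_coeff]
    have h0 : 0 + (m - 1) = m - 1 := by omega
    have h1' : 1 + (m - 1) = m := by omega
    rw [h0, h1']
    have hch : m.choose (m-1) = m := by
      conv_lhs => rw [show m = (m-1) + 1 by omega]
      rw [Nat.succ_sub_one, Nat.choose_succ_self_right]; omega
    rw [Nat.choose_self, hch]
    push_cast; ring
  have hne : (m:ℝ) * q.coeff m ≠ 0 := by
    apply mul_ne_zero _ hlc
    exact_mod_cast (by omega : m ≠ 0)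
  have hcoeffm : (q - q.comp (X - C 1)).coeff m = 0 := by
    rw [hcomp, coeff_sub, taylor_coeff]
    have hd : (hasseDeriv m q).natDegree < 1 := by
      have := natDegree_hasseDeriv_le q m; omega
    rw [eval_eq_sum_range' hd]
    simp [hasseDeriv_coeff, hm]
  have hdcomp : (q.comp (X - C 1)).natDegree = m := by
    rw [natDegree_comp, natDegree_X_sub_C, mul_one, hm]
  have hub : (q - q.comp (X - C 1)).natDegree ≤ m - 1 := by
    rw [natDegree_le_iff_coeff_eq_zero]
    intro N hN
    rcases eq_or_lt_of_le (by omega : m ≤ N) with h | h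
    · rw [← h]; exact hcoeffm
    · rw [coeff_sub, coeff_eq_zero_of_natDegree_lt (by omega),
        coeff_eq_zero_of_natDegree_lt (by omega), sub_zero]
  have hlb : m - 1 ≤ (q - q.comp (X - C 1)).natDegree := by
    apply le_natDegree_of_ne_zero
    rw [hcoeffm1]; exact hne
  refine ⟨le_antisymm hub hlb, fun h => ?_⟩
  rw [h] at hcoeffm1
  simp at hcoeffm1
  rcases hcoeffm1 with h' | h' <;> [omega; exact hlc h']

open Polynomial

section
variable (p : ℝ[X])

noncomputable def gshift (i : ℕ) : ℝ[X] := p.comp (X - C (i:ℝ))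

lemma gshift_comp (i : ℕ) : (gshift p i).comp (X - C 1) = gshift p (i+1) := by
  rw [gshift, gshift, comp_assoc]
  congr 1
  simp only [sub_comp, X_comp, C_comp]
  push_cast
  rw [map_add]
  ring

lemma gshift_natDegree (hp : 1 ≤ p.natDegree) (i : ℕ) :
    (gshift p i).natDegree = p.natDegree := by
  rw [gshift, natDegree_comp, natDegree_X_sub_C, mul_one]

lemma exists_deg (k : ℕ) (hk : p.natDegree = k) (j : ℕ) (hj : j + 1 ≤ k) :
    ∃ q ∈ Submodule.span ℝ (gshift p '' Set.Icc 1 (j+1)),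
      q.natDegree = k - j ∧ q ≠ 0 := by
  induction j with
  | zero =>
    refine ⟨gshift p 1, Submodule.subset_span ⟨1, by simp, rfl⟩, ?_, ?_⟩
    · rw [gshift_natDegree p (by omega), hk]; omega
    · intro h
      have := gshift_natDegree p (by omega : 1 ≤ p.natDegree) 1
      rw [h] at this; simp at this; omega
  | succ j ih =>
    obtain ⟨q, hqmem, hqdeg, hq0⟩ := ih (by omega)
    have hdelta := delta_natDegree q (k - j) hqdeg (by omega)
    refine ⟨q - q.comp (X - C 1), ?_, by rw [hdelta.1]; omega, hdelta.2⟩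
    have hmono : Submodule.span ℝ (gshift p '' Set.Icc 1 (j+1)) ≤
        Submodule.span ℝ (gshift p '' Set.Icc 1 (j+2)) :=
      Submodule.span_mono (Set.image_mono (Set.Icc_subset_Icc_right (by omega)))
    apply sub_mem (hmono hqmem)
    have : q.comp (X - C 1) = (aeval (X - C 1 : ℝ[X])).toLinearMap q := comp_eq_aeval
    rw [this]
    have hmap : (aeval (X - C 1 : ℝ[X])).toLinearMap q ∈
        Submodule.span ℝ ((aeval (X - C 1 : ℝ[X])).toLinearMap '' (gshift p '' Set.Icc 1 (j+1))) := by
      rw [← Submodule.map_span]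
      exact Submodule.mem_map_of_mem hqmem
    refine Submodule.span_mono ?_ hmap
    rintro _ ⟨_, ⟨i, ⟨hi1, hi2⟩, rfl⟩, rfl⟩
    exact ⟨i+1, ⟨by omega, by omega⟩, by
      rw [AlgHom.toLinearMap_apply, ← comp_eq_aeval, gshift_comp]⟩

lemma triangular (W : Submodule ℝ ℝ[X]) (k : ℕ)
    (h : ∀ d ≤ k, ∃ q ∈ W, q.natDegree = d ∧ q ≠ 0) :
    ∀ n ≤ k, ∀ f : ℝ[X], f.natDegree ≤ n → f ∈ W := by
  intro n
  induction n with
  | zero =>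
    intro _ f hf
    obtain ⟨q, hqW, hqd, hq0⟩ := h 0 (by omega)
    have hfC : f = C (f.coeff 0) := eq_C_of_natDegree_le_zero hf
    have hqC : q = C (q.coeff 0) := eq_C_of_natDegree_le_zero (le_of_eq hqd)
    have hq00 : q.coeff 0 ≠ 0 := fun hc => hq0 (by rw [hqC, hc, map_zero])
    have : f = (f.coeff 0 / q.coeff 0) • q := by
      rw [hfC, hqC, smul_C]
      congr 1
      field_simp
      simp [coeff_C_zero, smul_eq_mul, hq00]
    rw [this]
    exact W.smul_mem _ hqW
  | succ n ih =>
    intro hn f hf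
    obtain ⟨q, hqW, hqd, hq0⟩ := h (n+1) hn
    have hlc : q.coeff (n+1) ≠ 0 := by
      rw [← hqd, ← leadingCoeff]; exact leadingCoeff_ne_zero.mpr hq0
    set c := f.coeff (n+1) / q.coeff (n+1) with hc
    have hf' : (f - C c * q).natDegree ≤ n := by
      rw [natDegree_le_iff_coeff_eq_zero]
      intro N hN
      rcases eq_or_lt_of_le (by omega : n + 1 ≤ N) with hEq | hLt
      · rw [← hEq, coeff_sub, coeff_C_mul, hc]
        field_simp
        ring
      · rw [coeff_sub, coeff_eq_zero_of_natDegree_lt (by omega), coeff_C_mul,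
          coeff_eq_zero_of_natDegree_lt (by omega), mul_zero, sub_zero]
    have hmem := ih (by omega) _ hf'
    have : f = (f - C c * q) + c • q := by rw [smul_eq_C_mul]; ring
    rw [this]
    exact W.add_mem hmem (W.smul_mem _ hqW)

end
/-- for a real polynomial `p` of degree `k ≥ 1` there are constants
`b₀,…,b_k` with `b₀ + Σᵢ bᵢ p(n-i) = n` for all real `n`; consequently the sequence
`s(n) = p(n)` satisfies the depth-`k` recurrence `s(n) = p(b₀ + Σᵢ bᵢ s(n-i))`. -/
theorem polynomial_seq_is_recurrence (p : Polynomial ℝ) (k : ℕ)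
    (hk : p.natDegree = k) (hk1 : 1 ≤ k) :
    ∃ b : Fin (k + 1) → ℝ,
      (∀ x : ℝ, b 0 + ∑ i : Fin k, b i.succ * p.eval (x - ((i : ℕ) + 1)) = x) ∧
      (∀ n : ℕ, k ≤ n →
        p.eval (n : ℝ) =
          p.eval (b 0 + ∑ i : Fin k, b i.succ * p.eval ((n : ℝ) - ((i : ℕ) + 1)))) := by
  classical
  set F : Fin (k+1) → Polynomial ℝ :=
    Fin.cons 1 (fun i : Fin k => gshift p ((i:ℕ)+1)) with hF
  have hXmem : (X : Polynomial ℝ) ∈ Submodule.span ℝ (Set.range F) := by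
    refine triangular _ k ?_ 1 hk1 X (by simp)
    intro d hd
    rcases Nat.eq_zero_or_pos d with h0 | h1
    · refine ⟨1, Submodule.subset_span ⟨0, ?_⟩, by simp [h0], one_ne_zero⟩
      simp [hF]
    · obtain ⟨q, hq, hdq, hq0⟩ := exists_deg p k hk (k - d) (by omega)
      refine ⟨q, ?_, by rw [hdq]; omega, hq0⟩
      refine Submodule.span_mono ?_ hq
      rintro _ ⟨i, ⟨hi1, hi2⟩, rfl⟩
      refine ⟨Fin.succ ⟨i-1, by omega⟩, ?_⟩
      simp only [hF, Fin.cons_succ]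
      congr 1
      omega
  rw [Submodule.mem_span_range_iff_exists_fun] at hXmem
  obtain ⟨c, hc⟩ := hXmem
  have key : ∀ x : ℝ, c 0 + ∑ i : Fin k, c i.succ * p.eval (x - ((i : ℕ) + 1)) = x := by
    intro x
    have h := congrArg (Polynomial.eval x) hc
    rw [Polynomial.eval_finset_sum, Fin.sum_univ_succ] at h
    simp only [hF, Fin.cons_zero, Fin.cons_succ, Polynomial.smul_eq_C_mul,
      Polynomial.eval_mul, Polynomial.eval_C, Polynomial.eval_one, mul_one,
      gshift, Polynomial.eval_comp, Polynomial.eval_sub, Polynomial.eval_X,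
      Polynomial.eval_C] at h
    push_cast at h
    exact h
  exact ⟨c, key, fun n _ => by rw [key (n : ℝ)]⟩
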